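/- Let P be a rank-1 orthogonal projector P = (f ⊗ f†)/(f† f) with f holomorphic and nonvanishing. Then [∂̄P, P] = −(f ⊗ (P₊f)†)/(f† f). -/

import Mathlib

open Matrix Complex BigOperators

/-- Wirtinger derivative ∂ of a scalar function. -/
noncomputable def wd (g : ℂ → ℂ) (z : ℂ) : ℂ :=
  (fderiv ℝ g z 1 - Complex.I * fderiv ℝ g z Complex.I) / 2

/-- Wirtinger derivative ∂̄ of a scalar function. -/
noncomputable def wdbar (g : ℂ → ℂ) (z : ℂ) : ℂ :=
  (fderiv ℝ g z 1 + Complex.I * fderiv ℝ g z Complex.I) / 2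

/-- Componentwise ∂ of a vector-valued function. -/
noncomputable def wdv {N : ℕ} (f : ℂ → Fin N → ℂ) (z : ℂ) : Fin N → ℂ :=
  fun i => wd (fun w => f w i) z

/-- Componentwise ∂̄ of a vector-valued function. -/
noncomputable def wdbarv {N : ℕ} (f : ℂ → Fin N → ℂ) (z : ℂ) : Fin N → ℂ :=
  fun i => wdbar (fun w => f w i) z

/-- Entrywise ∂ of a matrix-valued function. -/
noncomputable def wdm {N : ℕ} (P : ℂ → Matrix (Fin N) (Fin N) ℂ) (z : ℂ) :
    Matrix (Fin N) (Fin N) ℂ :=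
  Matrix.of fun i j => wd (fun w => P w i j) z

/-- Entrywise ∂̄ of a matrix-valued function. -/
noncomputable def wdbarm {N : ℕ} (P : ℂ → Matrix (Fin N) (Fin N) ℂ) (z : ℂ) :
    Matrix (Fin N) (Fin N) ℂ :=
  Matrix.of fun i j => wdbar (fun w => P w i j) z

/-- The rank-1 projector P = (f ⊗ f†)/(f† f). -/
noncomputable def proj {N : ℕ} (f : Fin N → ℂ) : Matrix (Fin N) (Fin N) ℂ :=
  (star f ⬝ᵥ f)⁻¹ • Matrix.vecMulVec f (star f)

/-- P₊(f, g) = g − f (f† g)/(f† f). -/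
noncomputable def Pplus {N : ℕ} (f g : Fin N → ℂ) : Fin N → ℂ :=
  g - ((star f ⬝ᵥ g) / (star f ⬝ᵥ f)) • f

/-- fⱼ = P₊ʲ f, built from a map f : ℂ → ℂᴺ using the Wirtinger ∂. -/
noncomputable def Fseq {N : ℕ} (f : ℂ → Fin N → ℂ) : ℕ → ℂ → Fin N → ℂ
  | 0 => f
  | (j + 1) => fun z => Pplus (Fseq f j z) (wdv (Fseq f j) z)

/- ### Auxiliary Wirtinger calculus lemmas -/

lemma wdbar_hasFDerivAt {g : ℂ → ℂ} {L : ℂ →L[ℝ] ℂ} {z : ℂ} (h : HasFDerivAt g L z) :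
    wdbar g z = (L 1 + Complex.I * L Complex.I) / 2 := by
  rw [wdbar, h.fderiv]

lemma wd_hasFDerivAt {g : ℂ → ℂ} {L : ℂ →L[ℝ] ℂ} {z : ℂ} (h : HasFDerivAt g L z) :
    wd g z = (L 1 - Complex.I * L Complex.I) / 2 := by
  rw [wd, h.fderiv]

lemma fderiv_I_of_holo (g : ℂ → ℂ) (z : ℂ) :
    fderiv ℂ g z Complex.I = Complex.I * fderiv ℂ g z 1 := by
  have : fderiv ℂ g z Complex.I = Complex.I • fderiv ℂ g z 1 := by
    rw [← (fderiv ℂ g z).map_smul]; norm_num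
  simpa using this

lemma wdbar_holo {g : ℂ → ℂ} {z : ℂ} (h : DifferentiableAt ℂ g z) : wdbar g z = 0 := by
  have h1 : HasFDerivAt g ((fderiv ℂ g z).restrictScalars ℝ) z :=
    (h.hasFDerivAt).restrictScalars ℝ
  rw [wdbar_hasFDerivAt h1]
  simp only [ContinuousLinearMap.coe_restrictScalars', fderiv_I_of_holo]
  rw [← mul_assoc, Complex.I_mul_I]; ring

lemma wd_holo {g : ℂ → ℂ} {z : ℂ} (h : DifferentiableAt ℂ g z) : wd g z = deriv g z := by
  have h1 : HasFDerivAt g ((fderiv ℂ g z).restrictScalars ℝ) z :=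
    (h.hasFDerivAt).restrictScalars ℝ
  rw [wd_hasFDerivAt h1]
  simp only [ContinuousLinearMap.coe_restrictScalars', fderiv_I_of_holo]
  rw [← mul_assoc, Complex.I_mul_I, ← fderiv_apply_one_eq_deriv]; ring

lemma wdbar_conj {g : ℂ → ℂ} {z : ℂ} (h : DifferentiableAt ℂ g z) :
    wdbar (fun w => (starRingEnd ℂ) (g w)) z = (starRingEnd ℂ) (deriv g z) := by
  have h1 : HasFDerivAt g ((fderiv ℂ g z).restrictScalars ℝ) z :=
    (h.hasFDerivAt).restrictScalars ℝ
  have h2 : HasFDerivAt (fun w => (starRingEnd ℂ) (g w))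
      ((Complex.conjCLE.toContinuousLinearMap).comp ((fderiv ℂ g z).restrictScalars ℝ)) z :=
    (Complex.conjCLE.toContinuousLinearMap.hasFDerivAt).comp z h1
  rw [wdbar_hasFDerivAt h2]
  simp only [ContinuousLinearMap.coe_comp', Function.comp_apply,
    ContinuousLinearEquiv.coe_coe, Complex.conjCLE_apply,
    ContinuousLinearMap.coe_restrictScalars', fderiv_I_of_holo, ← fderiv_apply_one_eq_deriv]
  rw [_root_.map_mul]
  simp [Complex.conj_I]
  ring_nf
  rw [Complex.I_sq]
  ring

lemma wdbar_mul {g h : ℂ → ℂ} {z : ℂ} (hg : DifferentiableAt ℝ g z)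
    (hh : DifferentiableAt ℝ h z) :
    wdbar (fun w => g w * h w) z = wdbar g z * h z + g z * wdbar h z := by
  have h2 : HasFDerivAt (fun w => g w * h w) _ z := hg.hasFDerivAt.mul hh.hasFDerivAt
  rw [wdbar_hasFDerivAt h2]
  simp only [ContinuousLinearMap.add_apply, ContinuousLinearMap.smul_apply, smul_eq_mul]
  rw [wdbar_hasFDerivAt hg.hasFDerivAt, wdbar_hasFDerivAt hh.hasFDerivAt]
  ring

lemma wdbar_inv {g : ℂ → ℂ} {z : ℂ} (hg : DifferentiableAt ℝ g z) (h0 : g z ≠ 0) :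
    wdbar (fun w => (g w)⁻¹) z = -(wdbar g z) / (g z) ^ 2 := by
  have h2 : HasFDerivAt (fun w => (g w)⁻¹)
      ((-ContinuousLinearMap.mulLeftRight ℝ ℂ (g z)⁻¹ (g z)⁻¹).comp (fderiv ℝ g z)) z :=
    (hasFDerivAt_inv' h0).comp z hg.hasFDerivAt
  rw [wdbar_hasFDerivAt h2, wdbar_hasFDerivAt hg.hasFDerivAt]
  simp only [ContinuousLinearMap.coe_comp', Function.comp_apply,
    ContinuousLinearMap.neg_apply, ContinuousLinearMap.mulLeftRight_apply]
  field_simp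
  ring

lemma wdbar_sum {ι : Type*} (s : Finset ι) {g : ι → ℂ → ℂ} {z : ℂ}
    (hg : ∀ i ∈ s, DifferentiableAt ℝ (g i) z) :
    wdbar (fun w => ∑ i ∈ s, g i w) z = ∑ i ∈ s, wdbar (g i) z := by
  have h2 : HasFDerivAt (fun w => ∑ i ∈ s, g i w) (∑ i ∈ s, fderiv ℝ (g i) z) z :=
    HasFDerivAt.fun_sum (fun i hi => (hg i hi).hasFDerivAt)
  rw [wdbar_hasFDerivAt h2]
  simp only [ContinuousLinearMap.sum_apply, wdbar]
  rw [Finset.mul_sum, ← Finset.sum_add_distrib, Finset.sum_div]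

/-- for holomorphic nonvanishing f, [∂̄P, P] = −(f ⊗ (P₊f)†)/(f† f). -/
theorem stmt_3 {N : ℕ} (f : ℂ → Fin N → ℂ)
    (hhol : ∀ i, Differentiable ℂ (fun z => f z i))
    (hnv : ∀ z, f z ≠ 0) (ξ : ℂ) :
    wdbarm (fun z => proj (f z)) ξ * proj (f ξ) - proj (f ξ) * wdbarm (fun z => proj (f z)) ξ =
      -((star (f ξ) ⬝ᵥ f ξ)⁻¹ •
        Matrix.vecMulVec (f ξ) (star (Pplus (f ξ) (wdv f ξ)))) := by
  classical
  -- abbreviations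
  set s : ℂ := star (f ξ) ⬝ᵥ f ξ with hs_def
  set d : Fin N → ℂ := wdv f ξ with hd_def
  set a : ℂ := ∑ k, (starRingEnd ℂ) (d k) * f ξ k with ha_def
  -- basic differentiability facts
  have hfR : ∀ i, DifferentiableAt ℝ (fun z => f z i) ξ :=
    fun i => ((hhol i) ξ).restrictScalars ℝ
  have hconjR : ∀ i, DifferentiableAt ℝ (fun z => (starRingEnd ℂ) (f z i)) ξ := fun i =>
    (Complex.conjCLE.toContinuousLinearMap.differentiable.differentiableAt).comp ξ (hfR i)
  -- d is entrywise the complex derivative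
  have hd : ∀ k, d k = deriv (fun z => f z k) ξ := by
    intro k
    rw [hd_def]
    exact wd_holo ((hhol k) ξ)
  -- the scalar function S w = f† f
  set S : ℂ → ℂ := fun w => ∑ k, (starRingEnd ℂ) (f w k) * f w k with hS_def
  have hSval : ∀ w, star (f w) ⬝ᵥ f w = S w := by
    intro w
    simp [hS_def, dotProduct, Complex.star_def]
  have hSR : DifferentiableAt ℝ S ξ := by
    apply DifferentiableAt.fun_sum
    intro k _
    exact (hconjR k).mul (hfR k)
  have hs0 : s ≠ 0 := by
    intro h
    apply hnv ξ
    have hre : (∑ k, Complex.normSq (f ξ k) : ℝ) = 0 := by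
      have : s = ((∑ k, Complex.normSq (f ξ k) : ℝ) : ℂ) := by
        rw [hs_def]
        simp [dotProduct, Complex.star_def, Complex.normSq_eq_conj_mul_self]
      rw [this] at h
      exact_mod_cast h
    have hk : ∀ k ∈ Finset.univ, Complex.normSq (f ξ k) = 0 := by
      intro k _
      have := (Finset.sum_eq_zero_iff_of_nonneg
        (fun k _ => Complex.normSq_nonneg (f ξ k))).mp hre
      exact this k (Finset.mem_univ k)
    funext k
    exact Complex.normSq_eq_zero.mp (hk k (Finset.mem_univ k))
  have hSξ : S ξ = s := (hSval ξ).symm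
  have hSξ0 : S ξ ≠ 0 := by rw [hSξ]; exact hs0
  -- ∂̄ S
  have hwdbarS : wdbar S ξ = a := by
    rw [hS_def, wdbar_sum Finset.univ (g := fun k w => (starRingEnd ℂ) (f w k) * f w k) (fun k _ => (hconjR k).mul (hfR k)), ha_def]
    refine Finset.sum_congr rfl (fun k _ => ?_)
    rw [wdbar_mul (hconjR k) (hfR k), wdbar_conj ((hhol k) ξ), wdbar_holo ((hhol k) ξ), hd k]
    ring
  -- inverse of S is real-differentiable
  have hSinvR : DifferentiableAt ℝ (fun w => (S w)⁻¹) ξ :=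
    ((hasFDerivAt_inv' hSξ0).comp ξ hSR.hasFDerivAt).differentiableAt
  -- the entry formula for ∂̄ P
  have hentry : ∀ i j : Fin N,
      wdbar (fun w => proj (f w) i j) ξ =
        -(a / s ^ 2) * (f ξ i * (starRingEnd ℂ) (f ξ j))
          + s⁻¹ * (f ξ i * (starRingEnd ℂ) (d j)) := by
    intro i j
    have heq : (fun w => proj (f w) i j)
        = fun w => (S w)⁻¹ * (f w i * (starRingEnd ℂ) (f w j)) := by
      funext w
      simp [proj, Matrix.vecMulVec_apply, Matrix.smul_apply, hSval w, Complex.star_def]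
    rw [heq, wdbar_mul (h := fun w => f w i * (starRingEnd ℂ) (f w j)) hSinvR ((hfR i).mul (hconjR j)),
      wdbar_inv hSR hSξ0, hwdbarS,
      wdbar_mul (hfR i) (hconjR j), wdbar_holo ((hhol i) ξ), wdbar_conj ((hhol j) ξ),
      ← hd j, hSξ]
    ring
  -- conjugation facts
  have hconjs : (starRingEnd ℂ) s = s := by
    rw [hs_def]
    simp only [dotProduct, Pi.star_apply, Complex.star_def, map_sum, _root_.map_mul,
      Complex.conj_conj]
    exact Finset.sum_congr rfl fun k _ => mul_comm _ _
  have hconjb : (starRingEnd ℂ) (star (f ξ) ⬝ᵥ d) = a := by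
    rw [ha_def]
    simp only [dotProduct, Pi.star_apply, Complex.star_def, map_sum, _root_.map_mul,
      Complex.conj_conj]
    exact Finset.sum_congr rfl fun k _ => mul_comm _ _
  -- the main computation, entrywise
  ext i j
  simp only [Matrix.sub_apply, Matrix.mul_apply, wdbarm, Matrix.of_apply]
  have hP : ∀ k l : Fin N, proj (f ξ) k l = s⁻¹ * (f ξ k * (starRingEnd ℂ) (f ξ l)) := by
    intro k l
    simp [proj, Matrix.vecMulVec_apply, Matrix.smul_apply, hs_def, Complex.star_def]
  -- first sum : (∂̄P · P) i j
  have hsum1 : ∑ k, wdbar (fun w => proj (f w) i k) ξ * proj (f ξ) k j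
      = (∑ k, (starRingEnd ℂ) (f ξ k) * f ξ k)
          * (-(a / s ^ 2) * s⁻¹ * (f ξ i * (starRingEnd ℂ) (f ξ j)))
        + a * (s⁻¹ * s⁻¹ * (f ξ i * (starRingEnd ℂ) (f ξ j))) := by
    rw [ha_def, Finset.sum_mul, Finset.sum_mul, ← Finset.sum_add_distrib]
    refine Finset.sum_congr rfl (fun k _ => ?_)
    rw [hentry i k, hP k j]
    ring
  -- second sum : (P · ∂̄P) i j
  have hsum2 : ∑ k, proj (f ξ) i k * wdbar (fun w => proj (f w) k j) ξ
      = (∑ k, (starRingEnd ℂ) (f ξ k) * f ξ k)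
          * (s⁻¹ * f ξ i * (-(a / s ^ 2) * (starRingEnd ℂ) (f ξ j)
              + s⁻¹ * (starRingEnd ℂ) (d j))) := by
    rw [Finset.sum_mul]
    refine Finset.sum_congr rfl (fun k _ => ?_)
    rw [hentry k j, hP i k]
    ring
  have hss : (∑ k, (starRingEnd ℂ) (f ξ k) * f ξ k) = s := by
    rw [hs_def]; simp [dotProduct, Complex.star_def]
  rw [hsum1, hsum2, hss]
  -- right-hand side entry
  have hRHS : (-((star (f ξ) ⬝ᵥ f ξ)⁻¹ •
        Matrix.vecMulVec (f ξ) (star (Pplus (f ξ) (wdv f ξ))))) i j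
      = -(s⁻¹ * (f ξ i * ((starRingEnd ℂ) (d j)
          - (a / s) * (starRingEnd ℂ) (f ξ j)))) := by
    have hco : (starRingEnd ℂ) ((star (f ξ) ⬝ᵥ d) / s) = a / s := by
      rw [map_div₀, hconjb, hconjs]
    simp only [Matrix.neg_apply, Matrix.smul_apply, Matrix.vecMulVec_apply, Pplus,
      Pi.star_apply, Pi.sub_apply, Pi.smul_apply, smul_eq_mul, Complex.star_def,
      ← hs_def, ← hd_def, map_sub, _root_.map_mul, hco]
  rw [hRHS]
  field_simp [hs0]
  ring
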